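/- Let A = ⊕_{i∈ℕ} ℤ/p^{k_i} where p is a prime and (k_i) is a strictly increasing sequence of positive integers. Then the Jacobson radical of End(A) is not closed in the finite topology on End(A). -/

import Mathlib

open DirectSum

/-- The finite topology on the endomorphism ring of an abelian group: induced by the
inclusion into `A → A` where `A` carries the discrete topology. -/
def finTopEnd (A : Type*) [AddCommGroup A] : TopologicalSpace (AddMonoid.End A) :=
  TopologicalSpace.induced (fun f => (f : A → A))
    (@Pi.topologicalSpace A (fun _ => A) (fun _ => ⊥))

variable (p : ℕ) (k : ℕ → ℕ)

/-- The `i`-th component map: multiplication by `p ^ (k (i+1) - k i)`. -/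
def fmapAux (hk : StrictMono k) (i : ℕ) : ZMod (p ^ k i) →+ ZMod (p ^ k (i + 1)) :=
  ZMod.lift _ ⟨(AddMonoidHom.mulLeft ((p : ZMod (p ^ k (i + 1))) ^ (k (i + 1) - k i))).comp
      (Int.castAddHom _), by
    have h1 : k i ≤ k (i + 1) := (hk (Nat.lt_succ_self i)).le
    simp only [AddMonoidHom.comp_apply, Int.coe_castAddHom, AddMonoidHom.coe_mulLeft]
    push_cast
    rw [← pow_add, Nat.sub_add_cancel h1, ← Nat.cast_pow, ZMod.natCast_self]⟩

lemma fmapAux_intCast (hk : StrictMono k) (i : ℕ) (z : ℤ) :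
    fmapAux p k hk i ((z : ℤ) : ZMod (p ^ k i)) =
      (p : ZMod (p ^ k (i + 1))) ^ (k (i + 1) - k i) * (z : ZMod (p ^ k (i + 1))) := by
  simp [fmapAux, ZMod.lift_coe]

lemma fmapAux_one (hk : StrictMono k) (i : ℕ) :
    fmapAux p k hk i 1 = (p : ZMod (p ^ k (i + 1))) ^ (k (i + 1) - k i) := by
  have := fmapAux_intCast p k hk i 1
  simpa using this

lemma fmapAux_div (hk : StrictMono k) (i : ℕ) (v : ZMod (p ^ k i)) :
    ∃ w, fmapAux p k hk i v = p • w := by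
  obtain ⟨z, rfl⟩ : ∃ z : ℤ, (z : ZMod (p ^ k i)) = v := ⟨ZMod.cast v, ZMod.intCast_zmod_cast v⟩
  refine ⟨(p : ZMod (p ^ k (i + 1))) ^ (k (i + 1) - k i - 1) * (z : ZMod (p ^ k (i + 1))), ?_⟩
  rw [fmapAux_intCast, nsmul_eq_mul, ← mul_assoc, ← pow_succ']
  congr 2
  have h1 : k i < k (i + 1) := hk (Nat.lt_succ_self i)
  omega

/-- The "shift" endomorphism `e i ↦ p^(k(i+1)-k i) • e (i+1)`. -/
def shiftFull (hk : StrictMono k) : AddMonoid.End (⨁ i : ℕ, ZMod (p ^ k i)) :=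
  DirectSum.toAddMonoid fun i =>
    (DirectSum.of (fun j => ZMod (p ^ k j)) (i + 1)).comp (fmapAux p k hk i)

/-- The truncated shift endomorphism. -/
def shiftTrunc (hk : StrictMono k) (N : ℕ) : AddMonoid.End (⨁ i : ℕ, ZMod (p ^ k i)) :=
  DirectSum.toAddMonoid fun i =>
    if i < N then (DirectSum.of (fun j => ZMod (p ^ k j)) (i + 1)).comp (fmapAux p k hk i)
    else 0

lemma shiftFull_of (hk : StrictMono k) (i : ℕ) (v : ZMod (p ^ k i)) :
    shiftFull p k hk (DirectSum.of (fun j => ZMod (p ^ k j)) i v) =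
      DirectSum.of (fun j => ZMod (p ^ k j)) (i + 1) (fmapAux p k hk i v) := by
  rw [shiftFull]; exact DirectSum.toAddMonoid_of (β := fun j => ZMod (p ^ k j)) _ i v

lemma shiftTrunc_of_lt (hk : StrictMono k) {N i : ℕ} (h : i < N) (v : ZMod (p ^ k i)) :
    shiftTrunc p k hk N (DirectSum.of (fun j => ZMod (p ^ k j)) i v) =
      DirectSum.of (fun j => ZMod (p ^ k j)) (i + 1) (fmapAux p k hk i v) := by
  rw [shiftTrunc]; refine (DirectSum.toAddMonoid_of (β := fun j => ZMod (p ^ k j)) _ i v).trans ?_; rw [if_pos h]; rfl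

lemma shiftTrunc_of_ge (hk : StrictMono k) {N i : ℕ} (h : ¬ i < N) (v : ZMod (p ^ k i)) :
    shiftTrunc p k hk N (DirectSum.of (fun j => ZMod (p ^ k j)) i v) = 0 := by
  rw [shiftTrunc]; refine (DirectSum.toAddMonoid_of (β := fun j => ZMod (p ^ k j)) _ i v).trans ?_; rw [if_neg h]; rfl

lemma shiftTrunc_div (hk : StrictMono k) (N : ℕ) (x : ⨁ i : ℕ, ZMod (p ^ k i)) :
    ∃ y, shiftTrunc p k hk N x = p • y := by
  induction x using DirectSum.induction_on with
  | zero => exact ⟨0, by simp⟩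
  | of i v =>
      by_cases h : i < N
      · obtain ⟨w, hw⟩ := fmapAux_div p k hk i v
        exact ⟨DirectSum.of (fun j => ZMod (p ^ k j)) (i + 1) w, by
          rw [shiftTrunc_of_lt p k hk h, hw, map_nsmul]⟩
      · exact ⟨0, by rw [shiftTrunc_of_ge p k hk h]; simp⟩
  | add x y hx hy =>
      obtain ⟨y1, h1⟩ := hx; obtain ⟨y2, h2⟩ := hy
      exact ⟨y1 + y2, by rw [map_add, h1, h2, smul_add]⟩

lemma shiftTrunc_support (hk : StrictMono k) (N : ℕ) (x : ⨁ i : ℕ, ZMod (p ^ k i)) (j : ℕ)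
    (hj : N < j) : shiftTrunc p k hk N x j = 0 := by
  induction x using DirectSum.induction_on with
  | zero => simp
  | of i v =>
      by_cases h : i < N
      · rw [shiftTrunc_of_lt p k hk h]
        exact DirectSum.of_eq_of_ne _ _ _ (by omega)
      · rw [shiftTrunc_of_ge p k hk h]; simp
  | add x y hx hy => rw [map_add, DFinsupp.add_apply, hx, hy, add_zero]

lemma shiftTrunc_kill (hk : StrictMono k) (N : ℕ) (hp : 0 < p)
    (x y : ⨁ i : ℕ, ZMod (p ^ k i)) (h : shiftTrunc p k hk N x = p ^ k N • y) :
    shiftTrunc p k hk N x = 0 := by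
  refine DFinsupp.ext fun j => ?_
  rcases lt_or_ge N j with hj | hj
  · rw [shiftTrunc_support p k hk N x j hj]; rfl
  · have : shiftTrunc p k hk N x j = p ^ k N • (y j) := by
      rw [h]
      exact map_nsmul (DFinsupp.evalAddMonoidHom j) (p ^ k N) y ▸ rfl
    rw [this]
    haveI : NeZero (p ^ k j) := ⟨pow_ne_zero _ hp.ne'⟩
    rw [nsmul_eq_mul]
    have : ((p ^ k N : ℕ) : ZMod (p ^ k j)) = 0 := by
      rw [ZMod.natCast_eq_zero_iff]
      exact pow_dvd_pow p (hk.monotone hj)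
    rw [this, zero_mul]
    rfl

lemma shiftTrunc_pow_div (hk : StrictMono k) (N : ℕ) (γ : AddMonoid.End (⨁ i : ℕ, ZMod (p ^ k i)))
    (m : ℕ) (x : ⨁ i : ℕ, ZMod (p ^ k i)) :
    ∃ y, shiftTrunc p k hk N (((γ * shiftTrunc p k hk N) ^ m) x) = p ^ (m + 1) • y := by
  induction m generalizing x with
  | zero =>
      obtain ⟨y, hy⟩ := shiftTrunc_div p k hk N x
      exact ⟨y, by simpa [AddMonoid.End.one_apply] using hy⟩
  | succ m ih =>
      obtain ⟨y, hy⟩ := ih x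
      obtain ⟨w, hw⟩ := shiftTrunc_div p k hk N (γ y)
      refine ⟨w, ?_⟩
      have h1 : ((γ * shiftTrunc p k hk N) ^ (m + 1)) x
          = γ (shiftTrunc p k hk N (((γ * shiftTrunc p k hk N) ^ m) x)) := by
        rw [pow_succ']; rfl
      rw [h1, hy, map_nsmul, map_nsmul, hw, smul_smul, ← pow_succ]

lemma shiftTrunc_nilpotent (hp : 0 < p) (hk : StrictMono k) (N : ℕ)
    (γ : AddMonoid.End (⨁ i : ℕ, ZMod (p ^ k i))) :
    IsNilpotent (γ * shiftTrunc p k hk N) := by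
  refine ⟨k N + 1, ?_⟩
  refine DFunLike.ext _ _ fun x => ?_
  obtain ⟨y, hy⟩ := shiftTrunc_pow_div p k hk N γ (k N) x
  have hz : shiftTrunc p k hk N (((γ * shiftTrunc p k hk N) ^ k N) x) = 0 := by
    refine shiftTrunc_kill p k hk N hp _ (p • y) ?_
    rw [hy, smul_smul, ← pow_succ]
  have h1 : ((γ * shiftTrunc p k hk N) ^ (k N + 1)) x
      = γ (shiftTrunc p k hk N (((γ * shiftTrunc p k hk N) ^ k N) x)) := by
    rw [pow_succ']; rfl
  rw [h1, hz, map_zero]; rfl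

lemma shiftTrunc_mem_jacobson (hp : 0 < p) (hk : StrictMono k) (N : ℕ) :
    shiftTrunc p k hk N ∈ (⊥ : Ideal (AddMonoid.End (⨁ i : ℕ, ZMod (p ^ k i)))).jacobson := by
  rw [Ideal.jacobson, Ideal.mem_sInf]
  rintro M ⟨-, hmax⟩
  by_contra hmem
  have hlt : M < M ⊔ Ideal.span {shiftTrunc p k hk N} := by
    refine lt_of_le_of_ne le_sup_left fun h => hmem ?_
    rw [h]
    exact Submodule.mem_sup_right (Ideal.subset_span rfl)
  have htop : M ⊔ Ideal.span {shiftTrunc p k hk N} = ⊤ := hmax.1.2 _ hlt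
  have h1 : (1 : AddMonoid.End (⨁ i : ℕ, ZMod (p ^ k i))) ∈ M ⊔ Ideal.span {shiftTrunc p k hk N} :=
    htop ▸ Submodule.mem_top
  obtain ⟨m, hm, z, hz, hsum⟩ := Submodule.mem_sup.mp h1
  obtain ⟨r, rfl⟩ := Submodule.mem_span_singleton.mp hz
  have hmval : m = 1 - r * shiftTrunc p k hk N := by
    rw [← hsum, smul_eq_mul, add_sub_cancel_right]
  have hunit : IsUnit m := by
    rw [hmval]
    exact (shiftTrunc_nilpotent p k hp hk N r).isUnit_one_sub
  obtain ⟨u, hu⟩ := hunit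
  have h1M : (1 : AddMonoid.End (⨁ i : ℕ, ZMod (p ^ k i))) ∈ M := by
    have := M.smul_mem (↑u⁻¹ : AddMonoid.End _) hm
    rwa [smul_eq_mul, ← hu, Units.inv_mul] at this
  exact hmax.1.1 ((Ideal.eq_top_iff_one M).mpr h1M)

lemma shiftFull_no_left_inv (hp : p.Prime) (hk : StrictMono k) (hk1 : ∀ i, 0 < k i)
    (σ : AddMonoid.End (⨁ i : ℕ, ZMod (p ^ k i))) :
    σ * (1 - shiftFull p k hk) ≠ 1 := by
  intro hσ
  set A := ⨁ i : ℕ, ZMod (p ^ k i)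
  set e : (n : ℕ) → A := fun n => DirectSum.of (fun j => ZMod (p ^ k j)) n 1 with he
  -- the basic recurrence
  have rel : ∀ n, σ (e n) = e n + p ^ (k (n + 1) - k n) • σ (e (n + 1)) := by
    intro n
    have h1 : (σ * (1 - shiftFull p k hk)) (e n) = e n := by rw [hσ]; rfl
    have h2 : (1 - shiftFull p k hk) (e n) = e n - p ^ (k (n + 1) - k n) • e (n + 1) := by
      have h3 : shiftFull p k hk (e n) = p ^ (k (n + 1) - k n) • e (n + 1) := by
        rw [he, shiftFull_of, fmapAux_one]
        rw [show ((p : ZMod (p ^ k (n + 1))) ^ (k (n + 1) - k n)) =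
          (p ^ (k (n + 1) - k n)) • (1 : ZMod (p ^ k (n + 1))) by
            rw [nsmul_eq_mul, mul_one]; push_cast; ring]
        rw [map_nsmul]
      show e n - shiftFull p k hk (e n) = _; rw [h3]
    have h4 : σ (e n) - p ^ (k (n + 1) - k n) • σ (e (n + 1)) = e n := by
      have := h1
      rw [show (σ * (1 - shiftFull p k hk)) (e n) = σ ((1 - shiftFull p k hk) (e n)) from rfl,
        h2, map_sub, map_nsmul] at this
      exact this
    exact eq_add_of_sub_eq h4
  -- telescoping
  have claim : ∀ n, σ (e 0) = (∑ i ∈ Finset.range n, p ^ (k i - k 0) • e i)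
      + p ^ (k n - k 0) • σ (e n) := by
    intro n
    induction n with
    | zero => simp
    | succ n ih =>
        rw [ih, rel n, smul_add, smul_smul, ← pow_add, Finset.sum_range_succ, add_assoc]
        have h1 : k 0 ≤ k n := hk.monotone (Nat.zero_le n)
        have h2 : k n < k (n + 1) := hk (Nat.lt_succ_self n)
        have h3 : k n - k 0 + (k (n + 1) - k n) = k (n + 1) - k 0 := by omega
        rw [h3]
  -- every coordinate of σ (e 0) is nonzero
  have coord : ∀ n, (σ (e 0)) n ≠ 0 := by
    intro n h0
    have hc := congrArg (DFinsupp.evalAddMonoidHom n) (claim (n + 1))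
    rw [map_add, AddMonoidHom.map_nsmul, map_sum] at hc
    have hsum : ∑ i ∈ Finset.range (n + 1), (DFinsupp.evalAddMonoidHom n)
        (p ^ (k i - k 0) • e i) = p ^ (k n - k 0) • (1 : ZMod (p ^ k n)) := by
      rw [Finset.sum_eq_single n]
      · rw [AddMonoidHom.map_nsmul]
        congr 1
        exact DirectSum.of_eq_same (β := fun j => ZMod (p ^ k j)) n 1
      · intro i hi hne
        rw [AddMonoidHom.map_nsmul]
        have : (e i) n = 0 := DirectSum.of_eq_of_ne _ _ _ hne.symm
        rw [show (DFinsupp.evalAddMonoidHom n) (e i) = (e i) n from rfl, this, smul_zero]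
      · intro hn; exact absurd (Finset.self_mem_range_succ n) hn
    rw [hsum] at hc
    set c : ZMod (p ^ k n) := (DFinsupp.evalAddMonoidHom n) (σ (e (n + 1))) with hcdef
    have hc' : (0 : ZMod (p ^ k n)) = p ^ (k n - k 0) • (1 : ZMod (p ^ k n))
        + p ^ (k (n + 1) - k 0) • c := by
      rw [← hc]; exact h0 ▸ rfl
    have hmul := congrArg (fun z : ZMod (p ^ k n) => p ^ (k 0 - 1) • z) hc'
    simp only [smul_add, smul_smul, smul_zero, ← pow_add] at hmul
    have h01 : 0 < k 0 := hk1 0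
    have h0n : k 0 ≤ k n := hk.monotone (Nat.zero_le n)
    have hnn : k n < k (n + 1) := hk (Nat.lt_succ_self n)
    have e1 : k 0 - 1 + (k n - k 0) = k n - 1 := by omega
    have e2 : k 0 - 1 + (k (n + 1) - k 0) = k (n + 1) - 1 := by omega
    rw [e1, e2] at hmul
    haveI : NeZero (p ^ k n) := ⟨pow_ne_zero _ hp.ne_zero⟩
    have hterm2 : p ^ (k (n + 1) - 1) • c = 0 := by
      rw [nsmul_eq_mul]
      have : ((p ^ (k (n + 1) - 1) : ℕ) : ZMod (p ^ k n)) = 0 := by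
        rw [ZMod.natCast_eq_zero_iff]
        exact pow_dvd_pow p (by omega)
      rw [this, zero_mul]
    have hterm1 : (p ^ (k n - 1)) • (1 : ZMod (p ^ k n)) ≠ 0 := by
      rw [nsmul_eq_mul, mul_one]
      intro hz
      rw [ZMod.natCast_eq_zero_iff] at hz
      have := (Nat.pow_dvd_pow_iff_le_right hp.one_lt).mp hz
      omega
    rw [hterm2, add_zero] at hmul
    exact hterm1 hmul.symm
  -- contradiction with finite support
  set x := σ (e 0)
  have hn : (x.support.sup id) + 1 ∉ x.support := by
    intro hmem
    have := Finset.le_sup (f := id) hmem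
    simp only [id] at this
    omega
  exact coord _ (DFinsupp.notMem_support_iff.mp hn)

lemma shiftFull_not_mem_jacobson (hp : p.Prime) (hk : StrictMono k) (hk1 : ∀ i, 0 < k i) :
    shiftFull p k hk ∉ (⊥ : Ideal (AddMonoid.End (⨁ i : ℕ, ZMod (p ^ k i)))).jacobson := by
  intro hJ
  have hproper : Ideal.span {1 - shiftFull p k hk} ≠
      (⊤ : Ideal (AddMonoid.End (⨁ i : ℕ, ZMod (p ^ k i)))) := by
    intro htop
    have h1 : (1 : AddMonoid.End (⨁ i : ℕ, ZMod (p ^ k i))) ∈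
        Ideal.span {1 - shiftFull p k hk} := htop ▸ Submodule.mem_top
    obtain ⟨σ, hσ⟩ := Submodule.mem_span_singleton.mp h1
    rw [smul_eq_mul] at hσ
    exact shiftFull_no_left_inv p k hp hk hk1 σ hσ
  obtain ⟨M, hmax, hle⟩ := Ideal.exists_le_maximal _ hproper
  have hJM : shiftFull p k hk ∈ M := by
    have hle2 : (⊥ : Ideal (AddMonoid.End (⨁ i : ℕ, ZMod (p ^ k i)))).jacobson ≤ M :=
      sInf_le ⟨bot_le, hmax⟩
    exact hle2 hJ
  have h1M : (1 : AddMonoid.End (⨁ i : ℕ, ZMod (p ^ k i))) ∈ M := by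
    have := M.add_mem (hle (Ideal.subset_span rfl)) hJM
    rwa [sub_add_cancel] at this
  exact hmax.1.1 ((Ideal.eq_top_iff_one M).mpr h1M)

lemma shiftTrunc_agree (hk : StrictMono k) (N : ℕ) (x : ⨁ i : ℕ, ZMod (p ^ k i))
    (hx : ∀ j, N ≤ j → x j = 0) : shiftTrunc p k hk N x = shiftFull p k hk x := by
  classical
  conv_lhs => rw [← DirectSum.sum_support_of x]
  conv_rhs => rw [← DirectSum.sum_support_of x]
  rw [map_sum, map_sum]
  refine Finset.sum_congr rfl fun i hi => ?_
  have hiN : i < N := by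
    by_contra h
    exact (DFinsupp.mem_support_iff.mp hi) (hx i (by omega))
  rw [shiftTrunc_of_lt p k hk hiN, shiftFull_of]

/-- A sufficient criterion for membership in the closure w.r.t. the finite topology. -/
lemma mem_closure_finTopEnd {A : Type*} [AddCommGroup A] (S : Set (AddMonoid.End A))
    (g : AddMonoid.End A) (h : ∀ I : Finset A, ∃ s ∈ S, ∀ a ∈ I, s a = g a) :
    g ∈ @closure _ (finTopEnd A) S := by
  classical
  letI tA : TopologicalSpace A := ⊥
  haveI : DiscreteTopology A := ⟨rfl⟩
  letI tP : TopologicalSpace (A → A) := Pi.topologicalSpace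
  letI tE : TopologicalSpace (AddMonoid.End A) := finTopEnd A
  rw [mem_closure_iff_nhds]
  intro t ht
  have ht' : t ∈ Filter.comap (fun f : AddMonoid.End A => (f : A → A)) (nhds (g : A → A)) := by
    rw [← nhds_induced]
    exact ht
  obtain ⟨V, hV, hsub⟩ := Filter.mem_comap.mp ht'
  rw [nhds_pi, Filter.mem_pi] at hV
  obtain ⟨I, hIfin, t', ht', hpi⟩ := hV
  obtain ⟨s, hsS, hag⟩ := h hIfin.toFinset
  refine ⟨s, hsub ?_, hsS⟩
  refine hpi fun a ha => ?_
  have h1 : t' a ∈ nhds (g a) := ht' a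
  rw [nhds_discrete] at h1
  have h2 : g a ∈ t' a := h1
  show s a ∈ t' a
  rw [hag a (hIfin.mem_toFinset.mpr ha)]
  exact h2

theorem jacobson_not_closed_of_strictMono (p : ℕ) (hp : p.Prime)
    (k : ℕ → ℕ) (hk : StrictMono k) (hk1 : ∀ i, 0 < k i) :
    ¬ @IsClosed _ (finTopEnd (⨁ i : ℕ, ZMod (p ^ k i)))
        ((⊥ : Ideal (AddMonoid.End (⨁ i : ℕ, ZMod (p ^ k i)))).jacobson :
          Set (AddMonoid.End (⨁ i : ℕ, ZMod (p ^ k i)))) := by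
  classical
  intro hcl
  have hmem : shiftFull p k hk ∈ @closure _ (finTopEnd (⨁ i : ℕ, ZMod (p ^ k i)))
      (((⊥ : Ideal (AddMonoid.End (⨁ i : ℕ, ZMod (p ^ k i)))).jacobson :
        Set (AddMonoid.End (⨁ i : ℕ, ZMod (p ^ k i))))) := by
    refine mem_closure_finTopEnd _ _ fun I => ?_
    set N := (I.sup fun a => a.support.sup id) + 1 with hN
    refine ⟨shiftTrunc p k hk N, shiftTrunc_mem_jacobson p k hp.pos hk N, fun a ha => ?_⟩
    refine shiftTrunc_agree p k hk N a fun j hj => ?_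
    by_contra hzero
    have hmemj : j ∈ a.support := DFinsupp.mem_support_iff.mpr hzero
    have h1 : j ≤ a.support.sup id := Finset.le_sup (f := id) hmemj
    have h2 : a.support.sup id ≤ I.sup fun a => a.support.sup id :=
      Finset.le_sup (f := fun a => a.support.sup id) ha
    omega
  have hsub := @IsClosed.closure_subset (AddMonoid.End (⨁ i : ℕ, ZMod (p ^ k i)))
    (finTopEnd (⨁ i : ℕ, ZMod (p ^ k i)))
    ((⊥ : Ideal (AddMonoid.End (⨁ i : ℕ, ZMod (p ^ k i)))).jacobson :
      Set (AddMonoid.End (⨁ i : ℕ, ZMod (p ^ k i)))) hcl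
  have hfin := hsub hmem
  exact shiftFull_not_mem_jacobson p k hp hk hk1 (SetLike.mem_coe.mp hfin)
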